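/- Iterated integrals are invariant under inserting a trivial arrow: if α : I_n → G is a path map and α̂^i : I_{n+1} → G is obtained from α by inserting a trivial (constant) arrow between the i-th and (i+1)-th vertices, then ∫_{α̂^i} ω_1···ω_r = ∫_α ω_1···ω_r for all 1-forms ω_1,...,ω_r. -/

import Mathlib

open Finset

attribute [local instance] Classical.propDecidable

/-- A digraph: vertex type `V`, arrow relation without self-loops. -/
structure Digraph' (V : Type*) where
  Arrow : V → V → Prop
  irrefl : ∀ v, ¬ Arrow v v

/-- A step of a path map: an arrow `a → b` traversed forward, an arrow `a → b`
traversed backward (from `b` to `a`), or a trivial arrow at a vertex. -/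
inductive PStep (V : Type*) where
  | fwd : V → V → PStep V
  | bwd : V → V → PStep V
  | triv : V → PStep V

namespace PStep
variable {V : Type*}

def src : PStep V → V
  | fwd a _ => a
  | bwd _ b => b
  | triv a => a

def tgt : PStep V → V
  | fwd _ b => b
  | bwd a _ => a
  | triv a => a

/-- The step uses an actual arrow of `G` (or is trivial). -/
def ok (G : Digraph' V) : PStep V → Prop
  | fwd a b => G.Arrow a b
  | bwd a b => G.Arrow a b
  | triv _ => True

/-- The inverse step. -/
def inv : PStep V → PStep V
  | fwd a b => bwd a b
  | bwd a b => fwd a b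
  | triv a => triv a

/-- Pairing `⟨ω, s⟩` of a 1-form with a step: `ω(a)` forward, `-ω(a)` backward,
`0` on trivial arrows. -/
def pair {K : Type*} [Field K] (ω : V → V → K) : PStep V → K
  | fwd a b => ω a b
  | bwd a b => - ω a b
  | triv _ => 0

end PStep

/-- `σ 1, …, σ n` are the steps of a path map `I_n → G`. -/
def IsPathMap {V : Type*} (G : Digraph' V) (n : ℕ) (σ : ℕ → PStep V) : Prop :=
  (∀ t, 1 ≤ t → t ≤ n → (σ t).ok G) ∧
  (∀ t, 1 ≤ t → t < n → (σ t).tgt = (σ (t + 1)).src)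

/-- Volume number of a finite sequence: product of factorials of multiplicities. -/
def volFin {r : ℕ} (g : Fin r → ℕ) : ℕ :=
  ∏ k ∈ Finset.image g Finset.univ,
    Nat.factorial ((Finset.univ.filter (fun j => g j = k)).card)

/-- The iterated integral `∫_α ω_1 ⋯ ω_r` along a path map of length `n`
with steps `σ 1, …, σ n`. -/
noncomputable def iint (K : Type*) [Field K] {V : Type*} (n : ℕ) (σ : ℕ → PStep V)
    (r : ℕ) (ω : Fin r → V → V → K) : K :=
  ∑ f ∈ Finset.univ.filter (fun f : Fin r → Fin n => Monotone f),
    (∏ i, PStep.pair (ω i) (σ ((f i : ℕ) + 1))) / (volFin (fun i => (f i : ℕ)) : K)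

/-- Concatenation of step sequences: the first `n` steps from `σ`, then steps of `τ`. -/
def concatP {V : Type*} (n : ℕ) (σ τ : ℕ → PStep V) : ℕ → PStep V :=
  fun t => if t ≤ n then σ t else τ (t - n)

/-- The inverse path map of a path map of length `n`. -/
def invP {V : Type*} (n : ℕ) (σ : ℕ → PStep V) : ℕ → PStep V :=
  fun t => (σ (n + 1 - t)).inv

/-- Multiplicity of the value `k` in the (1-indexed) sequence `t 1, …, t r`. -/
def multN (t : ℕ → ℕ) (r k : ℕ) : ℕ := ((Finset.Icc 1 r).filter (fun j => t j = k)).card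

/-- Volume number of the sequence `t 1, …, t r`: the product over all `k` of
the factorial of the multiplicity of `k`. -/
noncomputable def volN (t : ℕ → ℕ) (r : ℕ) : ℕ := ∏ᶠ k, Nat.factorial (multN t r k)
set_option maxHeartbeats 1000000 in
lemma volFin_comp {r : ℕ} (g : Fin r → ℕ) (e : ℕ → ℕ)
    (he : ∀ a b : ℕ, a ∈ Set.range g → b ∈ Set.range g → e a = e b → a = b) :
    volFin (fun i => e (g i)) = volFin g := by
  classical
  unfold volFin
  have himg : Finset.image (fun i => e (g i)) Finset.univ
      = Finset.image e (Finset.image g Finset.univ) := by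
    rw [Finset.image_image]; rfl
  rw [himg, Finset.prod_image ?inj]
  case inj =>
    intro a ha b hb hab
    simp only [Finset.mem_coe, Finset.mem_image, Finset.mem_univ, true_and] at ha hb
    obtain ⟨i, rfl⟩ := ha; obtain ⟨j, rfl⟩ := hb
    exact he _ _ ⟨i, rfl⟩ ⟨j, rfl⟩ hab
  apply Finset.prod_congr rfl
  intro k hk
  simp only [Finset.mem_image, Finset.mem_univ, true_and] at hk
  obtain ⟨j0, rfl⟩ := hk
  have hfilter : (Finset.univ.filter (fun j : Fin r => e (g j) = e (g j0)))
      = Finset.univ.filter (fun j => g j = g j0) := by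
    apply Finset.filter_congr
    intro j _
    exact ⟨fun h => he _ _ ⟨j, rfl⟩ ⟨j0, rfl⟩ h, fun h => by rw [h]⟩
  simp only [hfilter]

set_option maxHeartbeats 1000000 in
theorem stmt6' {V : Type*} (K : Type*) [Field K] [CharZero K]
    (n : ℕ) (σ : ℕ → PStep V) (p : ℕ) (hp : p ≤ n) (v : V)
    (r : ℕ) (ω : Fin r → V → V → K) :
    iint K (n + 1)
      (fun t => if t ≤ p then σ t else if t = p + 1 then PStep.triv v else σ (t - 1)) r ω =
    iint K n σ r ω := by
  classical
  unfold iint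
  set σ' : ℕ → PStep V :=
    fun t => if t ≤ p then σ t else if t = p + 1 then PStep.triv v else σ (t - 1) with hσ'
  have h1 : ∑ f ∈ Finset.univ.filter (fun f : Fin r → Fin (n+1) => Monotone f),
      (∏ i, PStep.pair (ω i) (σ' ((f i : ℕ) + 1))) / (volFin (fun i => (f i : ℕ)) : K)
    = ∑ f ∈ Finset.univ.filter
        (fun f : Fin r → Fin (n+1) => Monotone f ∧ ∀ i, (f i : ℕ) ≠ p),
      (∏ i, PStep.pair (ω i) (σ' ((f i : ℕ) + 1))) / (volFin (fun i => (f i : ℕ)) : K) := by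
    apply (Finset.sum_subset ?_ ?_).symm
    · intro f hf
      simp only [Finset.mem_filter, Finset.mem_univ, true_and] at hf ⊢
      exact hf.1
    · intro f hf hnf
      simp only [Finset.mem_filter, Finset.mem_univ, true_and, not_and, not_forall,
        not_not] at hf hnf
      obtain ⟨i, hi⟩ := hnf hf
      rw [Finset.prod_eq_zero (Finset.mem_univ i), zero_div]
      have hσp : σ' ((f i : ℕ) + 1) = PStep.triv v := by
        rw [hi, hσ']; simp
      rw [hσp]
      rfl
  rw [h1]
  rcases Nat.eq_zero_or_pos n with rfl | hn
  · -- n = 0, p = 0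
    have hp0 : p = 0 := Nat.le_zero.mp hp
    subst hp0
    rcases Nat.eq_zero_or_pos r with rfl | hr
    · -- r = 0 : both sides have the unique empty function
      have hmono : ∀ f : Fin 0 → Fin 0, Monotone f := fun f a => a.elim0
      rw [Finset.filter_true_of_mem (fun (f : Fin 0 → Fin (0+1)) _ =>
            ⟨fun a => a.elim0, fun i => i.elim0⟩),
          Finset.filter_true_of_mem (fun f _ => hmono f)]
      rw [Finset.sum_unique_nonempty Finset.univ _ ⟨default, Finset.mem_univ _⟩,
          Finset.sum_unique_nonempty Finset.univ _ ⟨default, Finset.mem_univ _⟩]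
      simp [volFin]
    · -- r ≥ 1 : both sides are empty sums
      trans (0 : K)
      · apply Finset.sum_eq_zero
        intro f hf
        simp only [Finset.mem_filter, Finset.mem_univ, true_and] at hf
        have h2 := hf.2 ⟨0, hr⟩
        have hlt := (f ⟨0, hr⟩).isLt
        omega
      · symm
        apply Finset.sum_eq_zero
        intro f _
        exact (f ⟨0, hr⟩).elim0
  · -- n ≥ 1 : bijection
    apply Finset.sum_nbij'
      (i := fun f : Fin r → Fin (n+1) => fun i : Fin r =>
        (⟨if (f i : ℕ) < p then (f i : ℕ) else (f i : ℕ) - 1, by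
          have := (f i).isLt; split_ifs with h' <;> omega⟩ : Fin n))
      (j := fun g : Fin r → Fin n => fun i : Fin r =>
        (⟨if (g i : ℕ) < p then (g i : ℕ) else (g i : ℕ) + 1, by
          have := (g i).isLt; split_ifs with h' <;> omega⟩ : Fin (n+1)))
    · intro f hf
      simp only [Finset.mem_filter, Finset.mem_univ, true_and] at hf ⊢
      intro a b hab
      have h1 := hf.1 hab
      have h2 := hf.2 a
      have h3 := hf.2 b
      simp only [Fin.mk_le_mk, Fin.le_def] at h1 ⊢
      split_ifs <;> omega
    · intro g hg
      simp only [Finset.mem_filter, Finset.mem_univ, true_and] at hg ⊢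
      constructor
      · intro a b hab
        have h1 := hg hab
        simp only [Fin.mk_le_mk, Fin.le_def] at h1 ⊢
        split_ifs <;> omega
      · intro i
        show (if ((g i : ℕ)) < p then ((g i : ℕ)) else (g i : ℕ) + 1) ≠ p
        split_ifs <;> omega
    · intro f hf
      simp only [Finset.mem_filter, Finset.mem_univ, true_and] at hf
      funext i
      have := hf.2 i
      have := (f i).isLt
      apply Fin.ext
      show _ = ((f i : ℕ) : ℕ)
      dsimp only
      split_ifs <;> omega
    · intro g hg
      funext i
      have := (g i).isLt
      apply Fin.ext
      show _ = ((g i : ℕ) : ℕ)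
      dsimp only
      split_ifs <;> omega
    · intro f hf
      simp only [Finset.mem_filter, Finset.mem_univ, true_and] at hf
      congr 1
      · apply Finset.prod_congr rfl
        intro i _
        have hkey : σ' ((f i : ℕ) + 1)
            = σ ((if (f i : ℕ) < p then (f i : ℕ) else (f i : ℕ) - 1) + 1) := by
          have hne := hf.2 i
          rw [hσ']
          simp only
          split_ifs <;> first | rfl | omega | (congr 1; omega)
        rw [hkey]
      · norm_cast
        exact (volFin_comp (fun i => (f i : ℕ))
          (fun x => if x < p then x else x - 1)
          (fun a b ha hb hab => by
            obtain ⟨i, rfl⟩ := ha; obtain ⟨j, rfl⟩ := hb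
            have h1 := hf.2 i
            have h2 := hf.2 j
            have hab' : (if ((f i : ℕ)) < p then ((f i : ℕ)) else (f i : ℕ) - 1)
                = (if ((f j : ℕ)) < p then ((f j : ℕ)) else (f j : ℕ) - 1) := hab
            show ((f i : ℕ)) = ((f j : ℕ))
            split_ifs at hab' <;> omega)).symm

theorem stmt6 {V : Type*} (K : Type*) [Field K] [CharZero K] (G : Digraph' V)
    (n : ℕ) (σ : ℕ → PStep V) (h : IsPathMap G n σ) (p : ℕ) (hp : p ≤ n) (v : V)
    (hv : v = if p = 0 then (σ 1).src else (σ p).tgt)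
    (r : ℕ) (ω : Fin r → V → V → K) :
    iint K (n + 1)
      (fun t => if t ≤ p then σ t else if t = p + 1 then PStep.triv v else σ (t - 1)) r ω =
    iint K n σ r ω :=
  stmt6' K n σ p hp v r ω
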